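/- (Theorem 3.1(3.3), symmetric case.) Let D ⊆ ℝ^d be a bounded open set with the divergence property, let a = (a_{ij}) : ℝ^d → ℝ^{d×d} have C¹ entries with a symmetric and a(x) positive semidefinite for all x ∈ D, let b ≡ 0 (so L = ∇·a∇ is formally self-adjoint), and let β ≥ 0. Let ξ be continuous on an open neighborhood of the closure of D and let u be C² on an open neighborhood of the closure of D, vanishing on ∂D, with (β−L)u = ξ on D, and suppose c = ∫_D u ξ dx > 0. Then for every f ∈ M₁ one has ℰ_β(f,f) ≥ 1/c, with equality for f = u/c; hence inf over f ∈ M₁ of ℰ_β(f,f) = 1/∫_D u ξ dx. -/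

import Mathlib

open MeasureTheory

noncomputable section

/-- Partial derivative of `f` in the `i`-th coordinate direction. -/
def pd {d : ℕ} (f : (Fin d → ℝ) → ℝ) (i : Fin d) (x : Fin d → ℝ) : ℝ :=
  fderiv ℝ f x (Pi.single i 1)

/-- Divergence of a vector field on `ℝ^d`: `div F = Σ_i ∂_i F_i`. -/
def divg {d : ℕ} (F : (Fin d → ℝ) → (Fin d → ℝ)) (x : Fin d → ℝ) : ℝ :=
  ∑ i, fderiv ℝ (fun y => F y i) x (Pi.single i 1)

/-- The vector field `a∇g`, i.e. `(a∇g)_i = Σ_j a_{ij} ∂_j g`. -/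
def aGrad {d : ℕ} (a : (Fin d → ℝ) → Matrix (Fin d) (Fin d) ℝ)
    (g : (Fin d → ℝ) → ℝ) (x : Fin d → ℝ) : Fin d → ℝ :=
  fun i => ∑ j, a x i j * pd g j x

/-- The operator `Lg = ∇·(a∇g) + b·∇g`. -/
def Lop {d : ℕ} (a : (Fin d → ℝ) → Matrix (Fin d) (Fin d) ℝ)
    (b : (Fin d → ℝ) → (Fin d → ℝ)) (g : (Fin d → ℝ) → ℝ) (x : Fin d → ℝ) : ℝ :=
  divg (aGrad a g) x + ∑ i, b x i * pd g i x

/-- The formal adjoint `L̃f = ∇·(a∇f) − b·∇f − div(b) f`. -/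
def Ladj {d : ℕ} (a : (Fin d → ℝ) → Matrix (Fin d) (Fin d) ℝ)
    (b : (Fin d → ℝ) → (Fin d → ℝ)) (f : (Fin d → ℝ) → ℝ) (x : Fin d → ℝ) : ℝ :=
  divg (aGrad a f) x - (∑ i, b x i * pd f i x) - divg b x * f x

/-- `∇f · a ∇g = Σ_{i,j} (∂_i f) a_{ij} (∂_j g)`. -/
def quadF {d : ℕ} (a : (Fin d → ℝ) → Matrix (Fin d) (Fin d) ℝ)
    (f g : (Fin d → ℝ) → ℝ) (x : Fin d → ℝ) : ℝ :=
  ∑ i, ∑ j, pd f i x * a x i j * pd g j x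

/-- `f` is C² on an open neighborhood of the closure of `D`. -/
def C2Near {d : ℕ} (D : Set (Fin d → ℝ)) (f : (Fin d → ℝ) → ℝ) : Prop :=
  ∃ U : Set (Fin d → ℝ), IsOpen U ∧ closure D ⊆ U ∧ ContDiffOn ℝ 2 f U

/-- A vector field is C¹ on an open neighborhood of the closure of `D`. -/
def C1NearVF {d : ℕ} (D : Set (Fin d → ℝ)) (F : (Fin d → ℝ) → (Fin d → ℝ)) : Prop :=
  ∃ U : Set (Fin d → ℝ), IsOpen U ∧ closure D ⊆ U ∧ ∀ i, ContDiffOn ℝ 1 (fun x => F x i) U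

/-- `D` has the divergence property: `∫_D div F = 0` for every vector field `F` which is
C¹ on an open neighborhood of the closure of `D` and vanishes on the frontier of `D`. -/
def DivProp {d : ℕ} (D : Set (Fin d → ℝ)) : Prop :=
  ∀ F : (Fin d → ℝ) → (Fin d → ℝ), C1NearVF D F → (∀ x ∈ frontier D, F x = 0) →
    ∫ x in D, divg F x = 0

/-- The bilinear form `ℰ_β(f,g) = ∫_D f ((β−L)g) dx`. -/
def Eform {d : ℕ} (D : Set (Fin d → ℝ)) (a : (Fin d → ℝ) → Matrix (Fin d) (Fin d) ℝ)
    (b : (Fin d → ℝ) → (Fin d → ℝ)) (β : ℝ) (f g : (Fin d → ℝ) → ℝ) : ℝ :=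
  ∫ x in D, f x * (β * g x - Lop a b g x)

/-- `M_δ`: functions that are C² near the closure of `D`, vanish on `∂D`, and have
`∫_D h ξ dx = δ`. -/
def MemM {d : ℕ} (D : Set (Fin d → ℝ)) (ξ : (Fin d → ℝ) → ℝ) (δ : ℝ)
    (h : (Fin d → ℝ) → ℝ) : Prop :=
  C2Near D h ∧ (∀ x ∈ frontier D, h x = 0) ∧ (∫ x in D, h x * ξ x) = δ

lemma pd_contDiffOn {d : ℕ} {U : Set (Fin d → ℝ)} (hU : IsOpen U)
    {g : (Fin d → ℝ) → ℝ} (hg : ContDiffOn ℝ 2 g U) (j : Fin d) :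
    ContDiffOn ℝ 1 (pd g j) U := by
  have h1 : ContDiffOn ℝ 1 (fderiv ℝ g) U :=
    hg.fderiv_of_isOpen hU (by norm_num)
  exact h1.clm_apply contDiffOn_const

lemma aGrad_contDiffOn {d : ℕ} {U : Set (Fin d → ℝ)} (hU : IsOpen U)
    {a : (Fin d → ℝ) → Matrix (Fin d) (Fin d) ℝ}
    (ha : ∀ i j, ContDiff ℝ 1 (fun x => a x i j))
    {g : (Fin d → ℝ) → ℝ} (hg : ContDiffOn ℝ 2 g U) (i : Fin d) :
    ContDiffOn ℝ 1 (fun y => aGrad a g y i) U := by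
  unfold aGrad
  exact ContDiffOn.sum fun j _ => ((ha i j).contDiffOn).mul (pd_contDiffOn hU hg j)

lemma integrableOn_of_contOn {d : ℕ} {D U : Set (Fin d → ℝ)}
    (hDb : Bornology.IsBounded D) (hUD : closure D ⊆ U)
    {φ : (Fin d → ℝ) → ℝ} (hφ : ContinuousOn φ U) : IntegrableOn φ D := by
  have hc : IsCompact (closure D) := hDb.isCompact_closure
  exact ((hφ.mono hUD).integrableOn_compact hc).mono_set subset_closure

lemma divg_continuousOn {d : ℕ} {U : Set (Fin d → ℝ)} (hU : IsOpen U)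
    {F : (Fin d → ℝ) → (Fin d → ℝ)}
    (hF : ∀ i, ContDiffOn ℝ 1 (fun y => F y i) U) :
    ContinuousOn (divg F) U := by
  unfold divg
  refine continuousOn_finset_sum _ fun i _ => ?_
  have h1 : ContinuousOn (fderiv ℝ (fun y => F y i)) U :=
    (hF i).continuousOn_fderiv_of_isOpen hU le_rfl
  exact h1.clm_apply continuousOn_const

lemma quadF_continuousOn {d : ℕ} {U : Set (Fin d → ℝ)} (hU : IsOpen U)
    {a : (Fin d → ℝ) → Matrix (Fin d) (Fin d) ℝ}
    (ha : ∀ i j, ContDiff ℝ 1 (fun x => a x i j))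
    {f g : (Fin d → ℝ) → ℝ} (hf : ContDiffOn ℝ 2 f U) (hg : ContDiffOn ℝ 2 g U) :
    ContinuousOn (quadF a f g) U := by
  unfold quadF
  refine continuousOn_finset_sum _ fun i _ => continuousOn_finset_sum _ fun j _ => ?_
  exact (((pd_contDiffOn hU hf i).continuousOn.mul (ha i j).continuous.continuousOn).mul
    (pd_contDiffOn hU hg j).continuousOn)

lemma quadF_symm {d : ℕ} {a : (Fin d → ℝ) → Matrix (Fin d) (Fin d) ℝ}
    (hsym : ∀ x i j, a x i j = a x j i)
    (f g : (Fin d → ℝ) → ℝ) (x : Fin d → ℝ) :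
    quadF a f g x = quadF a g f x := by
  unfold quadF
  rw [Finset.sum_comm]
  exact Finset.sum_congr rfl fun j _ => Finset.sum_congr rfl fun i _ => by
    rw [hsym x i j]; ring

/-- Pointwise Leibniz identity: `div (f · a∇g) = ∇f·a∇g + f · div(a∇g)` on `U`. -/
lemma divg_smul_eq {d : ℕ} {U : Set (Fin d → ℝ)} (hU : IsOpen U)
    {a : (Fin d → ℝ) → Matrix (Fin d) (Fin d) ℝ}
    (ha : ∀ i j, ContDiff ℝ 1 (fun x => a x i j))
    {f g : (Fin d → ℝ) → ℝ} (hf : ContDiffOn ℝ 2 f U) (hg : ContDiffOn ℝ 2 g U)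
    {x : Fin d → ℝ} (hx : x ∈ U) :
    divg (fun y i => f y * aGrad a g y i) x
      = quadF a f g x + f x * divg (aGrad a g) x := by
  have hfd : DifferentiableAt ℝ f x :=
    (hf.differentiableOn (by norm_num)).differentiableAt (hU.mem_nhds hx)
  have hGd : ∀ i, DifferentiableAt ℝ (fun y => aGrad a g y i) x := fun i =>
    ((aGrad_contDiffOn hU ha hg i).differentiableOn one_ne_zero).differentiableAt (hU.mem_nhds hx)
  unfold divg
  have hstep : ∀ i : Fin d,
      fderiv ℝ (fun y => f y * aGrad a g y i) x (Pi.single i 1)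
        = pd f i x * aGrad a g x i + f x * fderiv ℝ (fun y => aGrad a g y i) x (Pi.single i 1) := by
    intro i
    rw [fderiv_fun_mul hfd (hGd i)]
    simp [pd]
    ring
  rw [Finset.sum_congr rfl fun i _ => hstep i, Finset.sum_add_distrib, Finset.mul_sum]
  congr 1
  unfold quadF aGrad
  exact Finset.sum_congr rfl fun i _ => by rw [Finset.mul_sum]; exact Finset.sum_congr rfl fun j _ => by ring

/-- Integration by parts: for `f, g` C² near closure `D` with `f` vanishing on `∂D`,
`ℰ_β(f,g) = ∫_D (β f g + ∇f·a∇g)`. -/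
lemma key_ibp {d : ℕ} (D : Set (Fin d → ℝ)) (hD : IsOpen D)
    (hDb : Bornology.IsBounded D) (hdiv : DivProp D)
    (a : (Fin d → ℝ) → Matrix (Fin d) (Fin d) ℝ)
    (ha : ∀ i j, ContDiff ℝ 1 (fun x => a x i j)) (β : ℝ)
    (f g : (Fin d → ℝ) → ℝ) (hf : C2Near D f) (hg : C2Near D g)
    (hf0 : ∀ x ∈ frontier D, f x = 0) :
    Eform D a 0 β f g = ∫ x in D, (β * f x * g x + quadF a f g x) := by
  obtain ⟨Uf, hUf, hUfD, hfC⟩ := hf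
  obtain ⟨Ug, hUg, hUgD, hgC⟩ := hg
  set U := Uf ∩ Ug with hUdef
  have hU : IsOpen U := hUf.inter hUg
  have hUD : closure D ⊆ U := Set.subset_inter hUfD hUgD
  have hfC' : ContDiffOn ℝ 2 f U := hfC.mono Set.inter_subset_left
  have hgC' : ContDiffOn ℝ 2 g U := hgC.mono Set.inter_subset_right
  set F : (Fin d → ℝ) → (Fin d → ℝ) := fun y i => f y * aGrad a g y i with hFdef
  -- divergence theorem for F
  have hFC1 : ∀ i, ContDiffOn ℝ 1 (fun y => F y i) U := fun i =>
    (hfC'.of_le (by norm_num)).mul (aGrad_contDiffOn hU ha hgC' i)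
  have hF0 : ∀ x ∈ frontier D, F x = 0 := by
    intro x hx
    funext i
    simp [hFdef, hf0 x hx]
  have hFdiv : ∫ x in D, divg F x = 0 := hdiv F ⟨U, hU, hUD, hFC1⟩ hF0
  -- pointwise identity on D
  have hDU : D ⊆ U := subset_closure.trans hUD
  have hpt : ∀ x ∈ D, f x * (β * g x - Lop a 0 g x)
      = (β * f x * g x + quadF a f g x) - divg F x := by
    intro x hx
    have h1 := divg_smul_eq hU ha hfC' hgC' (hDU hx)
    have h2 : Lop a 0 g x = divg (aGrad a g) x := by simp [Lop]
    rw [h2, hFdef, h1]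
    ring
  -- integrability
  have hint1 : IntegrableOn (fun x => β * f x * g x + quadF a f g x) D := by
    refine integrableOn_of_contOn hDb hUD ?_
    exact ((continuousOn_const.mul hfC'.continuousOn).mul hgC'.continuousOn).add
      (quadF_continuousOn hU ha hfC' hgC')
  have hint2 : IntegrableOn (fun x => divg F x) D :=
    integrableOn_of_contOn hDb hUD (divg_continuousOn hU hFC1)
  calc Eform D a 0 β f g
      = ∫ x in D, ((β * f x * g x + quadF a f g x) - divg F x) :=
        setIntegral_congr_fun hD.measurableSet hpt
    _ = (∫ x in D, (β * f x * g x + quadF a f g x)) - ∫ x in D, divg F x :=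
        integral_sub hint1 hint2
    _ = ∫ x in D, (β * f x * g x + quadF a f g x) := by rw [hFdiv, sub_zero]

lemma pd_div_const' {d : ℕ} {u : (Fin d → ℝ) → ℝ} {c : ℝ} {x : Fin d → ℝ}
    (hud : DifferentiableAt ℝ u x) (i : Fin d) :
    pd (fun y => u y / c) i x = c⁻¹ * pd u i x := by
  unfold pd
  have h1 : (fun y => u y / c) = fun y => c⁻¹ * u y := by
    funext y; rw [div_eq_inv_mul]
  rw [h1, fderiv_const_mul hud]
  simp

lemma quad_expand {d : ℕ} (A : Matrix (Fin d) (Fin d) ℝ) (p q : Fin d → ℝ) (t : ℝ) :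
    ∑ i, ∑ j, (p i - t * q i) * A i j * (p j - t * q j)
      = (∑ i, ∑ j, p i * A i j * p j) - t * (∑ i, ∑ j, p i * A i j * q j)
        - t * (∑ i, ∑ j, q i * A i j * p j) + t * t * (∑ i, ∑ j, q i * A i j * q j) := by
  simp only [Finset.mul_sum, ← Finset.sum_sub_distrib, ← Finset.sum_add_distrib]
  exact Finset.sum_congr rfl fun i _ => Finset.sum_congr rfl fun j _ => by ring

/-- the symmetric case (3.3): `ℰ_β(f,f) ≥ 1/c` for `f ∈ M₁` with equality at
`f = u/c`, hence `inf_{f∈M₁} ℰ_β(f,f) = 1/∫_D uξ dx`. Here `b ≡ 0`, so `L = ∇·a∇`. -/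
theorem stmt9 {d : ℕ} (D : Set (Fin d → ℝ)) (hD : IsOpen D)
    (hDb : Bornology.IsBounded D) (hdiv : DivProp D)
    (a : (Fin d → ℝ) → Matrix (Fin d) (Fin d) ℝ)
    (ha : ∀ i j, ContDiff ℝ 1 (fun x => a x i j))
    (hsym : ∀ x i j, a x i j = a x j i)
    (hpsd : ∀ x ∈ D, ∀ v : Fin d → ℝ, 0 ≤ ∑ i, ∑ j, v i * a x i j * v j)
    (β : ℝ) (hβ : 0 ≤ β)
    (ξ : (Fin d → ℝ) → ℝ)
    (hξ : ∃ U : Set (Fin d → ℝ), IsOpen U ∧ closure D ⊆ U ∧ ContinuousOn ξ U)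
    (u : (Fin d → ℝ) → ℝ)
    (hu : C2Near D u) (hu0 : ∀ x ∈ frontier D, u x = 0)
    (hueq : ∀ x ∈ D, β * u x - Lop a 0 u x = ξ x)
    (c : ℝ) (hc : c = ∫ x in D, u x * ξ x) (hcpos : 0 < c) :
    (∀ f, MemM D ξ 1 f → 1 / c ≤ Eform D a 0 β f f) ∧
    MemM D ξ 1 (fun x => u x / c) ∧
    Eform D a 0 β (fun x => u x / c) (fun x => u x / c) = 1 / c ∧
    (⨅ f : {f : (Fin d → ℝ) → ℝ // MemM D ξ 1 f}, Eform D a 0 β f.1 f.1)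
      = 1 / (∫ x in D, u x * ξ x) := by
  have hc0 : c ≠ 0 := ne_of_gt hcpos
  obtain ⟨Uu, hUu, hUuD, huC⟩ := hu
  have hDUu : D ⊆ Uu := subset_closure.trans hUuD
  set v : (Fin d → ℝ) → ℝ := fun x => u x / c with hvdef
  have hv0 : ∀ x ∈ frontier D, v x = 0 := fun x hx => by simp [hvdef, hu0 x hx]
  have hvC : C2Near D v := ⟨Uu, hUu, hUuD, huC.div_const c⟩
  have huC2 : C2Near D u := ⟨Uu, hUu, hUuD, huC⟩
  -- `ℰ(f,u) = ∫ f ξ`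
  have hEu : ∀ f : (Fin d → ℝ) → ℝ, Eform D a 0 β f u = ∫ x in D, f x * ξ x := fun f =>
    setIntegral_congr_fun hD.measurableSet fun x hx => by rw [hueq x hx]
  have hQuu : (∫ x in D, (β * u x * u x + quadF a u u x)) = c := by
    rw [← key_ibp D hD hDb hdiv a ha β u u huC2 huC2 hu0, hEu u, hc]
  -- membership of v in M₁
  have hvM : MemM D ξ 1 v := by
    refine ⟨hvC, hv0, ?_⟩
    have h1 : ∀ x, v x * ξ x = c⁻¹ * (u x * ξ x) := fun x => by
      simp only [hvdef]; ring
    calc (∫ x in D, v x * ξ x) = ∫ x in D, c⁻¹ * (u x * ξ x) := by simp only [h1]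
      _ = c⁻¹ * ∫ x in D, u x * ξ x := integral_const_mul _ _
      _ = 1 := by rw [← hc]; field_simp
  -- differentiability of u on D
  have hud : ∀ x ∈ D, DifferentiableAt ℝ u x := fun x hx =>
    (huC.differentiableOn (by norm_num)).differentiableAt (hUu.mem_nhds (hDUu hx))
  have hpdv : ∀ x ∈ D, ∀ i, pd v i x = c⁻¹ * pd u i x := fun x hx i =>
    pd_div_const' (hud x hx) i
  -- value at v
  have hEvv : Eform D a 0 β v v = 1 / c := by
    rw [key_ibp D hD hDb hdiv a ha β v v hvC hvC hv0]
    have hpt : ∀ x ∈ D, β * v x * v x + quadF a v v x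
        = c⁻¹ * c⁻¹ * (β * u x * u x + quadF a u u x) := by
      intro x hx
      have hq : quadF a v v x = c⁻¹ * c⁻¹ * quadF a u u x := by
        unfold quadF
        rw [Finset.mul_sum]
        refine Finset.sum_congr rfl fun i _ => ?_
        rw [Finset.mul_sum]
        refine Finset.sum_congr rfl fun j _ => ?_
        rw [hpdv x hx i, hpdv x hx j]; ring
      have hv : v x = c⁻¹ * u x := by simp only [hvdef]; rw [div_eq_inv_mul]
      rw [hq, hv]; ring
    rw [setIntegral_congr_fun hD.measurableSet hpt, integral_const_mul, hQuu]
    field_simp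
  -- the main inequality
  have hge : ∀ f, MemM D ξ 1 f → 1 / c ≤ Eform D a 0 β f f := by
    intro f hfM
    obtain ⟨⟨Uf, hUf, hUfD, hfC⟩, hf0, hfint⟩ := hfM
    set W := Uf ∩ Uu with hWdef
    have hW : IsOpen W := hUf.inter hUu
    have hWD : closure D ⊆ W := Set.subset_inter hUfD hUuD
    have hDW : D ⊆ W := subset_closure.trans hWD
    have hfW : ContDiffOn ℝ 2 f W := hfC.mono Set.inter_subset_left
    have huW : ContDiffOn ℝ 2 u W := huC.mono Set.inter_subset_right
    set h : (Fin d → ℝ) → ℝ := fun x => f x - u x / c with hhdef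
    have hnn : 0 ≤ ∫ x in D, (β * h x * h x + quadF a h h x) := by
      refine setIntegral_nonneg hD.measurableSet fun x hx => ?_
      have h1 : 0 ≤ β * h x * h x := by
        rw [mul_assoc]; exact mul_nonneg hβ (mul_self_nonneg _)
      have h2 : 0 ≤ quadF a h h x := by
        unfold quadF; exact hpsd x hx fun i => pd h i x
      linarith
    have hpdh : ∀ x ∈ D, ∀ i, pd h i x = pd f i x - c⁻¹ * pd u i x := by
      intro x hx i
      have hfd : DifferentiableAt ℝ f x :=
        (hfW.differentiableOn (by norm_num)).differentiableAt (hW.mem_nhds (hDW hx))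
      have hvd : DifferentiableAt ℝ (fun y => u y / c) x := by
        simp only [div_eq_inv_mul]; exact (hud x hx).const_mul c⁻¹
      have e1 : pd h i x
          = fderiv ℝ (fun y => f y - u y / c) x (Pi.single i 1) := by rw [hhdef]; rfl
      rw [e1, fderiv_fun_sub hfd hvd]
      simp only [ContinuousLinearMap.sub_apply]
      rw [show (fderiv ℝ (fun y => u y / c) x) (Pi.single i 1) = pd (fun y => u y / c) i x from rfl,
        pd_div_const' (hud x hx) i]
      rfl
    have hexp : ∀ x ∈ D, β * h x * h x + quadF a h h x
        = (β * f x * f x + quadF a f f x)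
          - 2 * c⁻¹ * (β * f x * u x + quadF a f u x)
          + c⁻¹ * c⁻¹ * (β * u x * u x + quadF a u u x) := by
      intro x hx
      have hQ : quadF a h h x
          = quadF a f f x - c⁻¹ * quadF a f u x - c⁻¹ * quadF a u f x
            + c⁻¹ * c⁻¹ * quadF a u u x := by
        have e2 : quadF a h h x
            = ∑ i, ∑ j, (pd f i x - c⁻¹ * pd u i x) * a x i j * (pd f j x - c⁻¹ * pd u j x) := by
          unfold quadF
          exact Finset.sum_congr rfl fun i _ => Finset.sum_congr rfl fun j _ => by
            rw [hpdh x hx i, hpdh x hx j]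
        rw [e2, quad_expand (a x) (fun i => pd f i x) (fun i => pd u i x) c⁻¹]
        rfl
      have hsymm : quadF a u f x = quadF a f u x := quadF_symm hsym u f x
      have hhx : h x = f x - u x / c := by rw [hhdef]
      rw [hQ, hsymm, hhx]
      field_simp
      ring
    -- integrability of the three pieces
    have intA : IntegrableOn (fun x => β * f x * f x + quadF a f f x) D :=
      integrableOn_of_contOn hDb hWD
        (((continuousOn_const.mul hfW.continuousOn).mul hfW.continuousOn).add
          (quadF_continuousOn hW ha hfW hfW))
    have intB : IntegrableOn (fun x => β * f x * u x + quadF a f u x) D :=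
      integrableOn_of_contOn hDb hWD
        (((continuousOn_const.mul hfW.continuousOn).mul huW.continuousOn).add
          (quadF_continuousOn hW ha hfW huW))
    have intC : IntegrableOn (fun x => β * u x * u x + quadF a u u x) D :=
      integrableOn_of_contOn hDb hWD
        (((continuousOn_const.mul huW.continuousOn).mul huW.continuousOn).add
          (quadF_continuousOn hW ha huW huW))
    have hsplit : (∫ x in D, (β * h x * h x + quadF a h h x))
        = (∫ x in D, (β * f x * f x + quadF a f f x))
          - 2 * c⁻¹ * (∫ x in D, (β * f x * u x + quadF a f u x))
          + c⁻¹ * c⁻¹ * (∫ x in D, (β * u x * u x + quadF a u u x)) := by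
      have h1 : IntegrableOn (fun x => β * f x * f x + quadF a f f x
          - 2 * c⁻¹ * (β * f x * u x + quadF a f u x)) D :=
        intA.sub (intB.const_mul (2 * c⁻¹))
      have h2 : IntegrableOn (fun x => c⁻¹ * c⁻¹ * (β * u x * u x + quadF a u u x)) D :=
        intC.const_mul (c⁻¹ * c⁻¹)
      have h3 : IntegrableOn (fun x => 2 * c⁻¹ * (β * f x * u x + quadF a f u x)) D :=
        intB.const_mul (2 * c⁻¹)
      rw [setIntegral_congr_fun hD.measurableSet hexp,
        integral_add h1 h2, integral_sub intA h3, integral_const_mul, integral_const_mul]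
    have hEff : Eform D a 0 β f f
        = ∫ x in D, (β * f x * f x + quadF a f f x) :=
      key_ibp D hD hDb hdiv a ha β f f ⟨Uf, hUf, hUfD, hfC⟩ ⟨Uf, hUf, hUfD, hfC⟩ hf0
    have hB : (∫ x in D, (β * f x * u x + quadF a f u x)) = 1 := by
      rw [← key_ibp D hD hDb hdiv a ha β f u ⟨Uf, hUf, hUfD, hfC⟩ huC2 hf0, hEu f, hfint]
    rw [hsplit, hB, hQuu] at hnn
    rw [hEff]
    have h3 : c⁻¹ * c⁻¹ * c = c⁻¹ := by field_simp
    rw [one_div]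
    linarith
  have hne : Nonempty {f : (Fin d → ℝ) → ℝ // MemM D ξ 1 f} := ⟨⟨v, hvM⟩⟩
  refine ⟨hge, hvM, hEvv, ?_⟩
  rw [← hc]
  refine le_antisymm ?_ (le_ciInf fun f => hge f.1 f.2)
  exact (ciInf_le ⟨1 / c, by rintro y ⟨f, rfl⟩; exact hge f.1 f.2⟩ ⟨v, hvM⟩).trans
    (le_of_eq hEvv)
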